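/- The corrected quadrature rule ∫_a^b p(x) dx = Σ_{j=0}^N [w_j f_j + q_j(ξ)], with w_j = ∫_a^b π_j and q_j(ξ) = g_j θ(ξ−x_j)∫_ξ^b π_j − g_j θ(x_j−ξ)∫_a^ξ π_j, exactly integrates the piecewise polynomial p(x) = θ(x−ξ) p_+(x) + θ(ξ−x) p_−(x) where p_±(x) = Σ_j [f_j ± appropriate correction] π_j(x) as in equations (16)–(17). -/
import Mathlib


open Finset

/-- The Heaviside step function with θ(0) = 1/2. -/
noncomputable def heaviside (t : ℝ) : ℝ := if 0 < t then 1 else if t = 0 then 1/2 else 0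

/-- The corrected quadrature rule Σ_j [w_j f_j + q_j(ξ)], with
w_j = ∫_a^b π_j, q_j(ξ) = g_j θ(ξ−x_j)∫_ξ^b π_j − g_j θ(x_j−ξ)∫_a^ξ π_j, exactly
integrates the piecewise polynomial p = θ(x−ξ)p_+ + θ(ξ−x)p_−, i.e.
∫_a^ξ p_− + ∫_ξ^b p_+ = Σ_j [w_j f_j + q_j(ξ)]. -/
theorem corrected_quadrature_exact
    (N : ℕ) (a b : ℝ) (x : Fin (N + 1) → ℝ) (hx : Function.Injective x)
    (hmem : ∀ i, x i ∈ Set.Icc a b)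
    (ξ : ℝ) (hξ : ξ ∈ Set.Ioo a b) (hξx : ∀ j, ξ ≠ x j)
    (f g : Fin (N + 1) → ℝ)
    (π : Fin (N + 1) → ℝ → ℝ)
    (hπ : ∀ j t, π j t = ∏ k ∈ Finset.univ.erase j, (t - x k) / (x j - x k))
    (pp pm : ℝ → ℝ)
    (hpp : ∀ t, pp t = ∑ j, (f j + heaviside (ξ - x j) * g j) * π j t)
    (hpm : ∀ t, pm t = ∑ j, (f j - heaviside (x j - ξ) * g j) * π j t)
    (w q : Fin (N + 1) → ℝ)
    (hw : ∀ j, w j = ∫ t in a..b, π j t)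
    (hq : ∀ j, q j = g j * heaviside (ξ - x j) * (∫ t in ξ..b, π j t)
                   - g j * heaviside (x j - ξ) * (∫ t in a..ξ, π j t)) :
    (∫ t in a..ξ, pm t) + (∫ t in ξ..b, pp t) = ∑ j, (w j * f j + q j) := by

  have hcont : ∀ j, Continuous (π j) := by
    intro j
    have : π j = fun t => ∏ k ∈ Finset.univ.erase j, (t - x k) / (x j - x k) :=
      funext (hπ j)
    rw [this]
    exact continuous_finset_prod _ fun k _ => (continuous_id.sub continuous_const).div_const _
  have hint : ∀ j (c d : ℝ), IntervalIntegrable (π j) MeasureTheory.volume c d :=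
    fun j c d => (hcont j).intervalIntegrable c d
  have h1 : (∫ t in a..ξ, pm t)
      = ∑ j, (f j - heaviside (x j - ξ) * g j) * ∫ t in a..ξ, π j t := by
    rw [intervalIntegral.integral_congr (fun t _ => hpm t),
      intervalIntegral.integral_finset_sum]
    · exact Finset.sum_congr rfl fun j _ => intervalIntegral.integral_const_mul _ _
    · exact fun j _ => (hint j a ξ).const_mul _
  have h2 : (∫ t in ξ..b, pp t)
      = ∑ j, (f j + heaviside (ξ - x j) * g j) * ∫ t in ξ..b, π j t := by
    rw [intervalIntegral.integral_congr (fun t _ => hpp t),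
      intervalIntegral.integral_finset_sum]
    · exact Finset.sum_congr rfl fun j _ => intervalIntegral.integral_const_mul _ _
    · exact fun j _ => (hint j ξ b).const_mul _
  rw [h1, h2, ← Finset.sum_add_distrib]
  refine Finset.sum_congr rfl fun j _ => ?_
  rw [hw j, hq j, ← intervalIntegral.integral_add_adjacent_intervals (hint j a ξ) (hint j ξ b)]
  ring
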